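/- For integers n ≥ 2, d ≥ 0 and natural numbers k ≠ 1, define B(n,d,k) = −(π^{d/2}·(n−1)/4)·Γ((d+2)/2)·Γ((k−1)/2)·Γ((n+k−1)/2)/(Γ((d+k+1)/2)·Γ((n+d+k+1)/2)). Then B(n,0,k) = (n−1)/((1−k)(n−1+k)), and B satisfies the recurrence B(n,d+2,k) = (2π/(n+d+2k)) · (B(n,d,k) − B(n,d,k+2)). -/
import Mathlib


/-- The closed-form multiplier `B(n,d,k) = a^{n,d}_k = a_k^{n+d}[g_n]` of C. Berg's
function `g_n` in dimension `n+d`. -/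
noncomputable def multB (n d k : ℕ) : ℝ :=
  -(Real.pi ^ ((d : ℝ) / 2) * ((n : ℝ) - 1) / 4) *
    Real.Gamma (((d : ℝ) + 2) / 2) * Real.Gamma (((k : ℝ) - 1) / 2) *
    Real.Gamma (((n : ℝ) + (k : ℝ) - 1) / 2) /
    (Real.Gamma (((d : ℝ) + (k : ℝ) + 1) / 2) *
      Real.Gamma (((n : ℝ) + (d : ℝ) + (k : ℝ) + 1) / 2))

lemma gamma_km1_ne_zero (k : ℕ) (hk : k ≠ 1) :
    Real.Gamma (((k : ℝ) - 1) / 2) ≠ 0 := by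
  apply Real.Gamma_ne_zero
  intro m hm
  rcases Nat.lt_or_ge k 1 with h | h
  · interval_cases k
    have h1 : (2 * m : ℝ) = 1 := by push_cast at hm ⊢; linarith
    have h2 : (2 * m : ℕ) = 1 := by exact_mod_cast h1
    omega
  · have h2 : 2 ≤ k := by omega
    have : (2 : ℝ) ≤ (k : ℝ) := by exact_mod_cast h2
    have : (0 : ℝ) ≤ (m : ℝ) := Nat.cast_nonneg m
    linarith

/-- `B(n,0,k) = (n−1)/((1−k)(n−1+k))` and
`B(n,d+2,k) = (2π/(n+d+2k)) (B(n,d,k) − B(n,d,k+2))`. -/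
theorem multB_initial_and_recurrence (n : ℕ) (hn : 2 ≤ n) (d : ℕ) (k : ℕ) (hk : k ≠ 1) :
    multB n 0 k = ((n : ℝ) - 1) / ((1 - (k : ℝ)) * ((n : ℝ) - 1 + (k : ℝ))) ∧
    multB n (d + 2) k
        = (2 * Real.pi / ((n : ℝ) + (d : ℝ) + 2 * (k : ℝ))) *
            (multB n d k - multB n d (k + 2)) := by
  have hn2 : (2 : ℝ) ≤ (n : ℝ) := by exact_mod_cast hn
  have hk0 : (0 : ℝ) ≤ (k : ℝ) := Nat.cast_nonneg k
  have hd0 : (0 : ℝ) ≤ (d : ℝ) := Nat.cast_nonneg d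
  have hkne : ((k : ℝ) - 1) / 2 ≠ 0 := by
    rcases Nat.lt_or_ge k 1 with h | h
    · interval_cases k; norm_num
    · rcases Nat.lt_or_ge k 2 with h' | h'
      · omega
      · have : (2 : ℝ) ≤ (k : ℝ) := by exact_mod_cast h'
        intro hc; nlinarith [hc]
  have hx1 : Real.Gamma (((k : ℝ) - 1) / 2) ≠ 0 := gamma_km1_ne_zero k hk
  have hx2 : Real.Gamma (((n : ℝ) + (k : ℝ) - 1) / 2) ≠ 0 :=
    ne_of_gt (Real.Gamma_pos_of_pos (by linarith))
  have hx3 : Real.Gamma (((d : ℝ) + (k : ℝ) + 1) / 2) ≠ 0 :=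
    ne_of_gt (Real.Gamma_pos_of_pos (by linarith))
  have hx4 : Real.Gamma (((n : ℝ) + (d : ℝ) + (k : ℝ) + 1) / 2) ≠ 0 :=
    ne_of_gt (Real.Gamma_pos_of_pos (by linarith))
  have hx5 : Real.Gamma (((d : ℝ) + 2) / 2) ≠ 0 :=
    ne_of_gt (Real.Gamma_pos_of_pos (by linarith))
  -- recurrence equations for Gamma
  have e1 : Real.Gamma (((k : ℝ) + 1) / 2)
      = (((k : ℝ) - 1) / 2) * Real.Gamma (((k : ℝ) - 1) / 2) := by
    rw [show ((k : ℝ) + 1) / 2 = ((k : ℝ) - 1) / 2 + 1 by ring, Real.Gamma_add_one hkne]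
  have e2 : Real.Gamma (((n : ℝ) + (k : ℝ) + 1) / 2)
      = (((n : ℝ) + (k : ℝ) - 1) / 2) * Real.Gamma (((n : ℝ) + (k : ℝ) - 1) / 2) := by
    rw [show ((n : ℝ) + (k : ℝ) + 1) / 2 = ((n : ℝ) + (k : ℝ) - 1) / 2 + 1 by ring,
      Real.Gamma_add_one (by intro hc; nlinarith)]
  have e3 : Real.Gamma (((d : ℝ) + (k : ℝ) + 3) / 2)
      = (((d : ℝ) + (k : ℝ) + 1) / 2) * Real.Gamma (((d : ℝ) + (k : ℝ) + 1) / 2) := by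
    rw [show ((d : ℝ) + (k : ℝ) + 3) / 2 = ((d : ℝ) + (k : ℝ) + 1) / 2 + 1 by ring,
      Real.Gamma_add_one (by intro hc; nlinarith)]
  have e4 : Real.Gamma (((n : ℝ) + (d : ℝ) + (k : ℝ) + 3) / 2)
      = (((n : ℝ) + (d : ℝ) + (k : ℝ) + 1) / 2)
        * Real.Gamma (((n : ℝ) + (d : ℝ) + (k : ℝ) + 1) / 2) := by
    rw [show ((n : ℝ) + (d : ℝ) + (k : ℝ) + 3) / 2
        = ((n : ℝ) + (d : ℝ) + (k : ℝ) + 1) / 2 + 1 by ring,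
      Real.Gamma_add_one (by intro hc; nlinarith)]
  have e5 : Real.Gamma (((d : ℝ) + 4) / 2)
      = (((d : ℝ) + 2) / 2) * Real.Gamma (((d : ℝ) + 2) / 2) := by
    rw [show ((d : ℝ) + 4) / 2 = ((d : ℝ) + 2) / 2 + 1 by ring,
      Real.Gamma_add_one (by intro hc; nlinarith)]
  have epow : Real.pi ^ (((d : ℝ) + 2) / 2)
      = Real.pi ^ ((d : ℝ) / 2) * Real.pi := by
    rw [show ((d : ℝ) + 2) / 2 = (d : ℝ) / 2 + 1 by ring,
      Real.rpow_add Real.pi_pos, Real.rpow_one]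
  constructor
  · simp only [multB]
    push_cast
    rw [show ((0 : ℝ) + 2) / 2 = 1 by norm_num, Real.Gamma_one,
      show ((0 : ℝ) + (k : ℝ) + 1) / 2 = ((k : ℝ) + 1) / 2 by ring,
      show ((n : ℝ) + 0 + (k : ℝ) + 1) / 2 = ((n : ℝ) + (k : ℝ) + 1) / 2 by ring,
      e1, e2]
    rw [show (0:ℝ)/2 = (0:ℝ) by norm_num, Real.rpow_zero]
    have h1 : (1 : ℝ) - (k : ℝ) ≠ 0 := by
      intro hc; apply hkne; linarith
    have h2 : (n : ℝ) - 1 + (k : ℝ) ≠ 0 := by intro hc; linarith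
    have h2' : ((n : ℝ) + (k : ℝ) - 1) / 2 ≠ 0 := by intro hc; apply h2; linarith
    set G1 := Real.Gamma (((k : ℝ) - 1) / 2) with hG1
    set G2 := Real.Gamma (((n : ℝ) + (k : ℝ) - 1) / 2) with hG2
    rw [div_eq_div_iff (mul_ne_zero (mul_ne_zero hkne hx1) (mul_ne_zero h2' hx2))
      (mul_ne_zero h1 h2)]
    ring
  · simp only [multB]
    push_cast
    rw [show ((d : ℝ) + 2 + 2) / 2 = ((d : ℝ) + 4) / 2 by ring,
      show ((d : ℝ) + 2 + (k : ℝ) + 1) / 2 = ((d : ℝ) + (k : ℝ) + 3) / 2 by ring,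
      show ((n : ℝ) + ((d : ℝ) + 2) + (k : ℝ) + 1) / 2
        = ((n : ℝ) + (d : ℝ) + (k : ℝ) + 3) / 2 by ring,
      show ((k : ℝ) + 2 - 1) / 2 = ((k : ℝ) + 1) / 2 by ring,
      show ((n : ℝ) + ((k : ℝ) + 2) - 1) / 2 = ((n : ℝ) + (k : ℝ) + 1) / 2 by ring,
      show ((d : ℝ) + ((k : ℝ) + 2) + 1) / 2 = ((d : ℝ) + (k : ℝ) + 3) / 2 by ring,
      show ((n : ℝ) + (d : ℝ) + ((k : ℝ) + 2) + 1) / 2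
        = ((n : ℝ) + (d : ℝ) + (k : ℝ) + 3) / 2 by ring,
      e1, e2, e3, e4, e5, epow]
    have hndk : (n : ℝ) + (d : ℝ) + 2 * (k : ℝ) ≠ 0 := by intro hc; linarith
    have h3 : ((d : ℝ) + (k : ℝ) + 1) / 2 ≠ 0 := by intro hc; linarith
    have h4 : ((n : ℝ) + (d : ℝ) + (k : ℝ) + 1) / 2 ≠ 0 := by intro hc; linarith
    set G1 := Real.Gamma (((k : ℝ) - 1) / 2) with hG1
    set G2 := Real.Gamma (((n : ℝ) + (k : ℝ) - 1) / 2) with hG2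
    set G3 := Real.Gamma (((d : ℝ) + (k : ℝ) + 1) / 2) with hG3
    set G4 := Real.Gamma (((n : ℝ) + (d : ℝ) + (k : ℝ) + 1) / 2) with hG4
    set G5 := Real.Gamma (((d : ℝ) + 2) / 2) with hG5
    set P := Real.pi ^ ((d : ℝ) / 2) with hP
    have hD1 : G3 * G4 ≠ 0 := mul_ne_zero hx3 hx4
    have hD2 : ((d : ℝ) + (k : ℝ) + 1) / 2 * G3 * (((n : ℝ) + (d : ℝ) + (k : ℝ) + 1) / 2 * G4)
        ≠ 0 := mul_ne_zero (mul_ne_zero h3 hx3) (mul_ne_zero h4 hx4)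
    rw [div_sub_div _ _ hD1 hD2, div_mul_div_comm,
      div_eq_div_iff hD2 (mul_ne_zero hndk (mul_ne_zero hD1 hD2))]
    ring
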